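/- Let R be an irreducible crystallographic root system spanning a finite-dimensional real vector space V, with Weyl group W, fixed base of simple roots {α_i}, fundamental Weyl chamber C_f and positive cone C⁺. For every x ∈ C_f, the intersection of the dual convex hull of the Weyl orbit W.x with the fundamental Weyl chamber equals the set of dominant points dominated by x; that is, dconv(W.x) ∩ C_f = { y ∈ C_f : x − y ∈ C⁺ }. -/

import Mathlib

/-- A finite crystallographic root system in a real vector space `V`, together with a fixed
base of simple roots indexed by `ι` (which form a basis of `V`). For each root `α`, the
coroot `α^∨` is recorded as a linear functional on `V` with `⟨α^∨, α⟩ = 2`, such that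
the reflection `v ↦ v - ⟨α^∨, v⟩ • α` preserves the root set, and all Cartan pairings
`⟨α^∨, β⟩` are integers. Every root is a nonnegative or nonpositive combination of the
simple roots. -/
structure RootSystemWithBase (ι V : Type*) [Fintype ι] [AddCommGroup V] [Module ℝ V] where
  /-- the set of roots -/
  R : Set V
  finR : R.Finite
  /-- the coroot `α^∨ ∈ V*` of a root `α` (junk value off `R`) -/
  coroot : V → V →ₗ[ℝ] ℝ
  coroot_self : ∀ α ∈ R, coroot α α = 2
  reflect_mem : ∀ α ∈ R, ∀ β ∈ R, β - coroot α β • α ∈ R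
  crystallographic : ∀ α ∈ R, ∀ β ∈ R, ∃ n : ℤ, coroot α β = (n : ℝ)
  /-- the simple roots, forming a basis of `V` -/
  simple : Module.Basis ι ℝ V
  simple_mem : ∀ i, simple i ∈ R
  base_prop : ∀ α ∈ R, (∀ i, 0 ≤ simple.repr α i) ∨ (∀ i, simple.repr α i ≤ 0)

namespace RootSystemWithBase

variable {ι V : Type*} [Fintype ι] [AddCommGroup V] [Module ℝ V]
  (P : RootSystemWithBase ι V)

/-- The Weyl group: the subgroup of linear automorphisms of `V` generated by the
reflections `v ↦ v - ⟨α^∨, v⟩ • α` for roots `α`. -/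
def weylGroup : Subgroup (V ≃ₗ[ℝ] V) :=
  Subgroup.closure {w | ∃ α ∈ P.R, ∀ v, w v = v - P.coroot α v • α}

/-- The orbit `W.x` of a point `x` under the Weyl group. -/
def orbit (x : V) : Set V := {y | ∃ w ∈ P.weylGroup, w x = y}

/-- A dual half-apartment: `{v | f_i(v) ≤ k}` or `{v | f_i(v) ≥ k}` for a fundamental
coweight functional `f_i` (dual basis to the simple roots) and `k ∈ ℝ`. -/
def IsDualHalfApartment (H : Set V) : Prop :=
  ∃ (i : ι) (k : ℝ),
    H = {v | P.simple.coord i v ≤ k} ∨ H = {v | k ≤ P.simple.coord i v}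

/-- The dual convex hull of `Y`: the intersection of all dual half-apartments
containing `Y` (the empty intersection being all of `V`). -/
def dconv (Y : Set V) : Set V :=
  ⋂₀ {H | P.IsDualHalfApartment H ∧ Y ⊆ H}

/-- The fundamental Weyl chamber `C_f = {v | ⟨α_i^∨, v⟩ ≥ 0 for all i}`. -/
def fundChamber : Set V := {v | ∀ i, 0 ≤ P.coroot (P.simple i) v}

/-- The positive cone `C⁺`, the set of nonnegative linear combinations of simple roots. -/
def posCone : Set V :=
  {v | ∃ t : ι → ℝ, (∀ i, 0 ≤ t i) ∧ v = ∑ i, t i • P.simple i}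

/-- Irreducibility: the base admits no partition into two nonempty mutually
orthogonal subsets. -/
def IsIrreducible : Prop :=
  ∀ s : Set ι,
    (∀ i ∈ s, ∀ j ∉ s, P.coroot (P.simple i) (P.simple j) = 0 ∧
        P.coroot (P.simple j) (P.simple i) = 0) →
    s = ∅ ∨ s = Set.univ


/-! ### Auxiliary development -/

section Aux

open Finset in
theorem aux_true : True := trivial

lemma root_ne_zero {β : V} (hβ : β ∈ P.R) : β ≠ 0 := by
  intro h
  have h2 := P.coroot_self β hβ
  rw [h] at h2
  simp at h2

lemma neg_mem_R {β : V} (hβ : β ∈ P.R) : -β ∈ P.R := by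
  have := P.reflect_mem β hβ β hβ
  rw [P.coroot_self β hβ] at this
  convert this using 1
  module

/-- The reflection in a root, as a linear map. -/
noncomputable def rlin (β : V) : V →ₗ[ℝ] V :=
  LinearMap.id - (P.coroot β).smulRight β

lemma rlin_apply (β v : V) : P.rlin β v = v - P.coroot β v • β := rfl

lemma rlin_invol {β : V} (h2 : P.coroot β β = 2) (v : V) :
    P.rlin β (P.rlin β v) = v := by
  simp only [rlin_apply, map_sub, map_smul, h2, smul_eq_mul]
  module

/-- The reflection in a root, as a linear equivalence. -/
noncomputable def re (β : V) (hβ : β ∈ P.R) : V ≃ₗ[ℝ] V :=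
  LinearEquiv.ofLinear (P.rlin β) (P.rlin β)
    (by ext v; exact P.rlin_invol (P.coroot_self β hβ) v)
    (by ext v; exact P.rlin_invol (P.coroot_self β hβ) v)

lemma re_apply {β : V} (hβ : β ∈ P.R) (v : V) :
    P.re β hβ v = v - P.coroot β v • β := rfl

lemma re_mul_self {β : V} (hβ : β ∈ P.R) : P.re β hβ * P.re β hβ = 1 := by
  apply LinearEquiv.toLinearMap_injective
  apply LinearMap.ext
  intro v
  exact P.rlin_invol (P.coroot_self β hβ) v

lemma re_inv {β : V} (hβ : β ∈ P.R) : (P.re β hβ)⁻¹ = P.re β hβ :=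
  inv_eq_of_mul_eq_one_right (P.re_mul_self hβ)

lemma re_mem_weyl {β : V} (hβ : β ∈ P.R) : P.re β hβ ∈ P.weylGroup :=
  Subgroup.subset_closure ⟨β, hβ, fun v => rfl⟩

/-- The simple reflections. -/
noncomputable def ss (i : ι) : V ≃ₗ[ℝ] V := P.re (P.simple i) (P.simple_mem i)

lemma ss_apply (i : ι) (v : V) :
    P.ss i v = v - P.coroot (P.simple i) v • P.simple i := rfl

lemma ss_mem_weyl (i : ι) : P.ss i ∈ P.weylGroup := P.re_mem_weyl _

lemma ss_mul_self (i : ι) : P.ss i * P.ss i = 1 := P.re_mul_self _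

lemma ss_inv (i : ι) : (P.ss i)⁻¹ = P.ss i := P.re_inv _

/-- Elements of the Weyl group preserve the root set. -/
lemma weyl_stable : ∀ w ∈ P.weylGroup, (∀ v ∈ P.R, w v ∈ P.R) ∧ (∀ v ∈ P.R, w⁻¹ v ∈ P.R) := by
  have : P.weylGroup ≤ {
      carrier := {w : V ≃ₗ[ℝ] V | (∀ v ∈ P.R, w v ∈ P.R) ∧ (∀ v ∈ P.R, w⁻¹ v ∈ P.R)}
      one_mem' := ⟨fun v hv => hv, fun v hv => hv⟩
      mul_mem' := by
        rintro a b ⟨ha1, ha2⟩ ⟨hb1, hb2⟩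
        refine ⟨fun v hv => ha1 _ (hb1 v hv), fun v hv => ?_⟩
        rw [mul_inv_rev]
        exact hb2 _ (ha2 v hv)
      inv_mem' := by
        rintro a ⟨ha1, ha2⟩
        refine ⟨ha2, fun v hv => ?_⟩
        rw [inv_inv]
        exact ha1 v hv } := by
    rw [weylGroup]
    apply Subgroup.closure_le _ |>.mpr
    rintro w ⟨β, hβ, hw⟩
    have hwre : w = P.re β hβ := by
      apply LinearEquiv.toLinearMap_injective
      apply LinearMap.ext
      intro v
      exact hw v
    subst hwre
    constructor
    · intro v hv
      rw [re_apply]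
      exact P.reflect_mem β hβ v hv
    · intro v hv
      rw [P.re_inv hβ, re_apply]
      exact P.reflect_mem β hβ v hv
  exact fun w hw => this hw

lemma weyl_mem_R {w : V ≃ₗ[ℝ] V} (hw : w ∈ P.weylGroup) {v : V} (hv : v ∈ P.R) :
    w v ∈ P.R := (P.weyl_stable w hw).1 v hv

lemma weyl_inv_mem_R {w : V ≃ₗ[ℝ] V} (hw : w ∈ P.weylGroup) {v : V} (hv : v ∈ P.R) :
    w⁻¹ v ∈ P.R := (P.weyl_stable w hw).2 v hv

/-- The coroot of a root is uniquely determined. -/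
lemma coroot_unique {β : V} (hβ : β ∈ P.R) (g : V →ₗ[ℝ] ℝ) (hg2 : g β = 2)
    (hgR : ∀ γ ∈ P.R, γ - g γ • β ∈ P.R) : g = P.coroot β := by
  have hβ0 : β ≠ 0 := P.root_ne_zero hβ
  -- the difference h kills every root
  have key : ∀ γ ∈ P.R, P.coroot β γ = g γ := by
    intro γ hγ
    by_contra hne
    set c : ℝ := P.coroot β γ - g γ with hc
    have hc0 : c ≠ 0 := sub_ne_zero_of_ne hne
    -- iterates γ + k • c • β all lie in R
    have hmem : ∀ k : ℕ, γ + (k : ℝ) • c • β ∈ P.R := by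
      intro k
      induction k with
      | zero => simpa using hγ
      | succ n ih =>
        have e1 : P.coroot β (γ + (n : ℝ) • c • β) = P.coroot β γ + (n : ℝ) * c * 2 := by
          simp [map_add, map_smul, P.coroot_self β hβ, smul_eq_mul]; ring
        have e2 : g (γ + (n : ℝ) • c • β - (P.coroot β γ + (n : ℝ) * c * 2) • β)
            = g γ - P.coroot β γ * 2 - (n : ℝ) * c * 2 := by
          simp [map_add, map_sub, map_smul, hg2, smul_eq_mul]; ring
        have step := P.reflect_mem β hβ _ ih
        rw [e1] at step
        have step2 := hgR _ step
        rw [e2] at step2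
        convert step2 using 1
        rw [hc]
        push_cast
        module
    have hinj : Function.Injective (fun k : ℕ => γ + (k : ℝ) • c • β) := by
      intro k l hkl
      simp only [add_right_inj] at hkl
      have hcb : c • β ≠ 0 := smul_ne_zero hc0 hβ0
      have h0 : ((k : ℝ) - (l : ℝ)) • (c • β) = 0 := by rw [sub_smul, hkl, sub_self]
      have h1 : (k : ℝ) = (l : ℝ) := by
        have := (smul_eq_zero.mp h0).resolve_right hcb
        linarith [sub_eq_zero.mp this]
      exact_mod_cast h1
    exact (Set.infinite_of_injective_forall_mem hinj hmem) P.finR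
  symm
  apply Module.Basis.ext P.simple
  intro i
  exact key _ (P.simple_mem i)

end Aux

section Aux2

lemma inv_apply_eq_symm {w : V ≃ₗ[ℝ] V} (v : V) : (w⁻¹ : V ≃ₗ[ℝ] V) v = w.symm v := rfl

lemma mul_apply_eq (w u : V ≃ₗ[ℝ] V) (v : V) : (w * u) v = w (u v) := rfl

lemma coroot_neg {β : V} (hβ : β ∈ P.R) : P.coroot (-β) = -P.coroot β := by
  have h := P.coroot_unique (P.neg_mem_R hβ) (-P.coroot β)
    (by simp [P.coroot_self β hβ])
    (by intro γ hγ
        have := P.reflect_mem β hβ γ hγ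
        convert this using 1
        simp)
  exact h.symm

lemma weyl_symm_mem_R {w : V ≃ₗ[ℝ] V} (hw : w ∈ P.weylGroup) {v : V} (hv : v ∈ P.R) :
    w.symm v ∈ P.R := P.weyl_inv_mem_R hw hv

lemma coroot_conj {w : V ≃ₗ[ℝ] V} (hw : w ∈ P.weylGroup) {β : V} (hβ : β ∈ P.R) :
    P.coroot (w β) = (P.coroot β).comp (w.symm : V →ₗ[ℝ] V) := by
  symm
  apply P.coroot_unique (P.weyl_mem_R hw hβ)
  · simp [P.coroot_self β hβ]
  · intro γ hγ
    have h1 : w.symm γ ∈ P.R := P.weyl_symm_mem_R hw hγ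
    have h2 := P.reflect_mem β hβ _ h1
    have h3 := P.weyl_mem_R hw h2
    have expand : w (w.symm γ - P.coroot β (w.symm γ) • β)
        = γ - ((P.coroot β).comp (w.symm : V →ₗ[ℝ] V)) γ • (w β) := by
      rw [map_sub, map_smul, w.apply_symm_apply]
      rfl
    rwa [expand] at h3

lemma coroot_conj_apply {w : V ≃ₗ[ℝ] V} (hw : w ∈ P.weylGroup) {β : V} (hβ : β ∈ P.R)
    (v : V) : P.coroot (w β) v = P.coroot β (w.symm v) := by
  rw [P.coroot_conj hw hβ]; rfl

lemma re_conj {w : V ≃ₗ[ℝ] V} (hw : w ∈ P.weylGroup) {β : V} (hβ : β ∈ P.R) :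
    P.re (w β) (P.weyl_mem_R hw hβ) = w * P.re β hβ * w⁻¹ := by
  apply LinearEquiv.toLinearMap_injective
  apply LinearMap.ext
  intro v
  show P.re (w β) (P.weyl_mem_R hw hβ) v = (w * P.re β hβ * w⁻¹) v
  have h1 : (w * P.re β hβ * w⁻¹) v = w (P.re β hβ (w.symm v)) := rfl
  rw [h1, re_apply, re_apply, P.coroot_conj_apply hw hβ]
  rw [map_sub, map_smul, w.apply_symm_apply]

/-- positive roots -/
def IsPos (β : V) : Prop := β ∈ P.R ∧ ∀ i, 0 ≤ P.simple.repr β i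

/-- negative roots -/
def IsNeg (β : V) : Prop := β ∈ P.R ∧ ∀ i, P.simple.repr β i ≤ 0

lemma pos_or_neg {β : V} (hβ : β ∈ P.R) : P.IsPos β ∨ P.IsNeg β := by
  rcases P.base_prop β hβ with h | h
  · exact Or.inl ⟨hβ, h⟩
  · exact Or.inr ⟨hβ, h⟩

lemma not_pos_and_neg {β : V} (hp : P.IsPos β) (hn : P.IsNeg β) : False := by
  have h0 : ∀ i, P.simple.repr β i = 0 := fun i => le_antisymm (hn.2 i) (hp.2 i)
  have hβ0 : β = 0 := by
    have hr : P.simple.repr β = 0 := Finsupp.ext h0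
    simpa using congrArg P.simple.repr.symm hr
  exact P.root_ne_zero hp.1 hβ0

lemma isPos_simple (i : ι) : P.IsPos (P.simple i) := by
  refine ⟨P.simple_mem i, fun j => ?_⟩
  rw [P.simple.repr_self]
  rcases eq_or_ne i j with h | h
  · subst h; simp
  · rw [Finsupp.single_eq_of_ne (Ne.symm h)]

lemma isNeg_neg {β : V} (hβ : β ∈ P.R) (h : P.IsPos β) : P.IsNeg (-β) := by
  refine ⟨P.neg_mem_R hβ, fun i => ?_⟩
  rw [map_neg]
  simpa using h.2 i

lemma isPos_neg {β : V} (hβ : β ∈ P.R) (h : P.IsNeg β) : P.IsPos (-β) := by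
  refine ⟨P.neg_mem_R hβ, fun i => ?_⟩
  rw [map_neg]
  simpa using h.2 i

lemma ss_repr_ne (i : ι) (v : V) {k : ι} (hk : k ≠ i) :
    P.simple.repr (P.ss i v) k = P.simple.repr v k := by
  rw [ss_apply, map_sub, map_smul]
  rw [P.simple.repr_self]
  simp [Finsupp.single_eq_of_ne hk]

lemma ss_repr_self (i : ι) (v : V) :
    P.simple.repr (P.ss i v) i = P.simple.repr v i - P.coroot (P.simple i) v := by
  rw [ss_apply, map_sub, map_smul]
  rw [P.simple.repr_self]
  simp

/-- a simple reflection maps positive roots not proportional to the simple root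
to positive roots -/
lemma ss_pos {i : ι} {β : V} (hβ : P.IsPos β) {k : ι} (hk : k ≠ i)
    (hknz : 0 < P.simple.repr β k) : P.IsPos (P.ss i β) := by
  have hmem : P.ss i β ∈ P.R := P.reflect_mem _ (P.simple_mem i) β hβ.1
  have hcoord : 0 < P.simple.repr (P.ss i β) k := by
    rw [P.ss_repr_ne i β hk]
    exact hknz
  rcases P.pos_or_neg hmem with h | h
  · exact h
  · exact absurd (h.2 k) (not_le.mpr hcoord)

/-- a positive root sent to a negative root by a simple reflection is a positive
multiple of that simple root -/
lemma pos_to_neg {i : ι} {β : V} (hβ : P.IsPos β) (hneg : P.IsNeg (P.ss i β)) :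
    ∃ c : ℝ, 0 < c ∧ β = c • P.simple i := by
  have hzero : ∀ k, k ≠ i → P.simple.repr β k = 0 := by
    intro k hk
    have h1 := hβ.2 k
    have h2 := hneg.2 k
    rw [P.ss_repr_ne i β hk] at h2
    linarith
  have hrep : β = P.simple.repr β i • P.simple i := by
    conv_lhs => rw [← P.simple.sum_repr β]
    rw [Finset.sum_eq_single i]
    · intro k _ hk
      rw [hzero k hk, zero_smul]
    · intro h; exact absurd (Finset.mem_univ i) h
  refine ⟨P.simple.repr β i, ?_, hrep⟩
  rcases lt_or_eq_of_le (hβ.2 i) with h | h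
  · exact h
  · exfalso
    apply P.root_ne_zero hβ.1
    rw [hrep, ← h, zero_smul]

/-- reflection in a nonzero multiple of a simple root is the simple reflection -/
lemma re_smul_simple {i : ι} {β : V} (hβ : β ∈ P.R) {c : ℝ} (hc : c ≠ 0)
    (hrep : β = c • P.simple i) : P.re β hβ = P.ss i := by
  have hco : P.coroot β = c⁻¹ • P.coroot (P.simple i) := by
    symm
    apply P.coroot_unique hβ
    · rw [hrep]
      rw [LinearMap.smul_apply, map_smul]
      rw [P.coroot_self _ (P.simple_mem i)]
      simp [smul_eq_mul]
      field_simp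
    · intro γ hγ
      have h := P.reflect_mem _ (P.simple_mem i) γ hγ
      convert h using 2
      rw [hrep, LinearMap.smul_apply, smul_eq_mul, smul_smul]
      congr 1
      field_simp
  apply LinearEquiv.toLinearMap_injective
  apply LinearMap.ext
  intro v
  show P.re β hβ v = P.ss i v
  rw [re_apply, ss_apply, hco, hrep]
  rw [LinearMap.smul_apply, smul_eq_mul, smul_smul]
  rw [mul_comm (c⁻¹), mul_assoc, inv_mul_cancel₀ hc, mul_one]

end Aux2

section Aux3

lemma weyl_finite : Finite ↥P.weylGroup := by
  haveI : Finite ↥P.R := P.finR.to_subtype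
  haveI : Finite (↥P.R → ↥P.R) := Pi.finite
  apply Finite.of_injective
    (fun w : ↥P.weylGroup => (fun r : ↥P.R => (⟨w.1 r.1, P.weyl_mem_R w.2 r.2⟩ : ↥P.R)))
  intro w w' h
  have hvv : ∀ v ∈ P.R, w.1 v = w'.1 v := by
    intro v hv
    have := congrFun h ⟨v, hv⟩
    exact congrArg Subtype.val this
  ext1
  apply LinearEquiv.toLinearMap_injective
  apply Module.Basis.ext P.simple
  intro i
  exact hvv _ (P.simple_mem i)

noncomputable instance weylFintype : Fintype ↥P.weylGroup :=
  @Fintype.ofFinite _ P.weyl_finite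

/-- auxiliary inner product -/
noncomputable def B0 (u v : V) : ℝ := ∑ i, P.simple.repr u i * P.simple.repr v i

lemma B0_symm (u v : V) : P.B0 u v = P.B0 v u := by
  unfold B0; exact Finset.sum_congr rfl fun i _ => mul_comm _ _

lemma B0_add_left (u u' v : V) : P.B0 (u + u') v = P.B0 u v + P.B0 u' v := by
  unfold B0
  rw [← Finset.sum_add_distrib]
  exact Finset.sum_congr rfl fun i _ => by rw [map_add, Finsupp.add_apply, add_mul]

lemma B0_smul_left (c : ℝ) (u v : V) : P.B0 (c • u) v = c * P.B0 u v := by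
  unfold B0
  rw [Finset.mul_sum]
  exact Finset.sum_congr rfl fun i _ => by
    rw [map_smul, Finsupp.smul_apply, smul_eq_mul, mul_assoc]

lemma B0_nonneg_self (u : V) : 0 ≤ P.B0 u u :=
  Finset.sum_nonneg fun i _ => mul_self_nonneg _

lemma B0_pos_self {u : V} (hu : u ≠ 0) : 0 < P.B0 u u := by
  rcases (P.B0_nonneg_self u).lt_or_eq with h | h
  · exact h
  · exfalso
    apply hu
    have h0 : ∀ i ∈ Finset.univ, P.simple.repr u i * P.simple.repr u i = 0 := by
      have := (Finset.sum_eq_zero_iff_of_nonneg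
        (fun i _ => mul_self_nonneg (P.simple.repr u i))).mp h.symm
      exact this
    have hr : P.simple.repr u = 0 := by
      apply Finsupp.ext
      intro i
      have := h0 i (Finset.mem_univ i)
      exact mul_self_eq_zero.mp this
    simpa using congrArg P.simple.repr.symm hr

/-- Weyl-invariant inner product -/
noncomputable def Bw (u v : V) : ℝ := ∑ w : ↥P.weylGroup, P.B0 (w.1 u) (w.1 v)

lemma Bw_symm (u v : V) : P.Bw u v = P.Bw v u :=
  Finset.sum_congr rfl fun w _ => P.B0_symm _ _

lemma Bw_add_left (u u' v : V) : P.Bw (u + u') v = P.Bw u v + P.Bw u' v := by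
  unfold Bw
  rw [← Finset.sum_add_distrib]
  exact Finset.sum_congr rfl fun w _ => by rw [map_add, P.B0_add_left]

lemma Bw_add_right (u v v' : V) : P.Bw u (v + v') = P.Bw u v + P.Bw u v' := by
  rw [P.Bw_symm, P.Bw_add_left, P.Bw_symm v u, P.Bw_symm v' u]

lemma Bw_smul_left (c : ℝ) (u v : V) : P.Bw (c • u) v = c * P.Bw u v := by
  unfold Bw
  rw [Finset.mul_sum]
  exact Finset.sum_congr rfl fun w _ => by rw [map_smul, P.B0_smul_left]

lemma Bw_smul_right (c : ℝ) (u v : V) : P.Bw u (c • v) = c * P.Bw u v := by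
  rw [P.Bw_symm, P.Bw_smul_left, P.Bw_symm]

lemma Bw_neg_left (u v : V) : P.Bw (-u) v = -P.Bw u v := by
  have := P.Bw_smul_left (-1) u v
  simpa using this

lemma Bw_sub_left (u u' v : V) : P.Bw (u - u') v = P.Bw u v - P.Bw u' v := by
  rw [sub_eq_add_neg, P.Bw_add_left, P.Bw_neg_left, sub_eq_add_neg]

lemma Bw_sub_right (u v v' : V) : P.Bw u (v - v') = P.Bw u v - P.Bw u v' := by
  rw [P.Bw_symm, P.Bw_sub_left, P.Bw_symm v u, P.Bw_symm v' u]

lemma Bw_nonneg_self (u : V) : 0 ≤ P.Bw u u :=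
  Finset.sum_nonneg fun w _ => P.B0_nonneg_self _

lemma Bw_pos_self {u : V} (hu : u ≠ 0) : 0 < P.Bw u u := by
  have h1 : P.B0 ((⟨1, one_mem _⟩ : ↥P.weylGroup).1 u) ((⟨1, one_mem _⟩ : ↥P.weylGroup).1 u)
      ≤ P.Bw u u :=
    Finset.single_le_sum (f := fun w : ↥P.weylGroup => P.B0 (w.1 u) (w.1 u))
      (fun w _ => P.B0_nonneg_self _) (Finset.mem_univ _)
  have h2 : (0:ℝ) < P.B0 u u := P.B0_pos_self hu
  have h3 : (⟨1, one_mem _⟩ : ↥P.weylGroup).1 u = u := rfl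
  rw [h3] at h1
  linarith

lemma Bw_eq_zero_self {u : V} (h : P.Bw u u ≤ 0) : u = 0 := by
  by_contra hu
  exact absurd h (not_le.mpr (P.Bw_pos_self hu))

lemma Bw_invariant {w : V ≃ₗ[ℝ] V} (hw : w ∈ P.weylGroup) (u v : V) :
    P.Bw (w u) (w v) = P.Bw u v := by
  unfold Bw
  apply Fintype.sum_equiv (Equiv.mulRight (⟨w, hw⟩ : ↥P.weylGroup))
  intro g
  rfl

lemma Bw_sum_left {c : ι → ℝ} {e : ι → V} (v : V) :
    P.Bw (∑ i, c i • e i) v = ∑ i, c i * P.Bw (e i) v := by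
  classical
  induction (Finset.univ : Finset ι) using Finset.induction with
  | empty => simp [show P.Bw 0 v = 0 by simpa using P.Bw_smul_left 0 0 v]
  | insert _ _ hni ih =>
      rw [Finset.sum_insert hni, Finset.sum_insert hni, P.Bw_add_left, P.Bw_smul_left, ih]

lemma Bw_sum_right' {c : ι → ℝ} {e : ι → V} (v : V) :
    P.Bw v (∑ i, c i • e i) = ∑ i, c i * P.Bw v (e i) := by
  rw [P.Bw_symm, P.Bw_sum_left]
  exact Finset.sum_congr rfl fun i _ => by rw [P.Bw_symm]

end Aux3

section Aux4

lemma Bw_simple_self_pos (i : ι) : 0 < P.Bw (P.simple i) (P.simple i) :=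
  P.Bw_pos_self (P.root_ne_zero (P.simple_mem i))

/-- the coroot pairing is computed by the invariant form -/
lemma Bw_simple (i : ι) (v : V) :
    P.Bw (P.simple i) v
      = P.coroot (P.simple i) v * P.Bw (P.simple i) (P.simple i) / 2 := by
  have hinv := P.Bw_invariant (P.ss_mem_weyl i) (P.simple i) v
  have hssi : P.ss i (P.simple i) = -P.simple i := by
    rw [ss_apply, P.coroot_self _ (P.simple_mem i)]
    module
  rw [show P.ss i (P.simple i) = _ from hssi] at hinv
  rw [show P.ss i v = v - P.coroot (P.simple i) v • P.simple i from rfl] at hinv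
  rw [P.Bw_neg_left, P.Bw_sub_right, P.Bw_smul_right] at hinv
  linarith [hinv]

lemma coroot_simple_offdiag {i j : ι} (hij : j ≠ i) :
    P.coroot (P.simple i) (P.simple j) ≤ 0 := by
  by_contra hpos
  push_neg at hpos
  have hβ : P.IsPos (P.ss i (P.simple j)) := by
    apply P.ss_pos (P.isPos_simple j) hij
    rw [P.simple.repr_self]
    simp
  have h2 := hβ.2 i
  rw [P.ss_repr_self i] at h2
  rw [P.simple.repr_self, Finsupp.single_eq_of_ne (Ne.symm hij)] at h2
  linarith

lemma Bw_simple_offdiag {i j : ι} (hij : j ≠ i) :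
    P.Bw (P.simple i) (P.simple j) ≤ 0 := by
  rw [P.Bw_simple i]
  have h1 := P.coroot_simple_offdiag hij
  have h2 := P.Bw_simple_self_pos i
  have := mul_nonpos_of_nonpos_of_nonneg h1 (le_of_lt h2)
  linarith

/-- coordinates of a dominant vector are nonnegative -/
lemma repr_nonneg_of_dominant {u : V} (hu : u ∈ P.fundChamber) (i : ι) :
    0 ≤ P.simple.repr u i := by
  classical
  set c : ι → ℝ := fun j => P.simple.repr u j with hc
  set d : ι → ℝ := fun j => max (-c j) 0 with hd
  have hd0 : ∀ j, 0 ≤ d j := fun j => le_max_right _ _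
  set ym : V := ∑ j, d j • P.simple j with hym
  have hrepym : ∀ k, P.simple.repr ym k = d k := by
    intro k
    rw [hym]
    exact congrFun (P.simple.repr_sum_self d) k
  -- yp = u + ym has nonnegative coefficients e j = max (c j) 0
  have hyp : u + ym = ∑ j, (max (c j) 0) • P.simple j := by
    conv_lhs => rw [← P.simple.sum_repr u]
    rw [hym, ← Finset.sum_add_distrib]
    apply Finset.sum_congr rfl
    intro j _
    rw [← add_smul]
    congr 1
    have hmx := max_add_add_right (-c j) 0 (c j)
    simp only [neg_add_cancel, zero_add] at hmx
    show c j + max (-c j) 0 = max (c j) 0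
    rw [add_comm, ← hmx, max_comm]
  -- Bw ym (u + ym) ≤ 0
  have h1 : P.Bw ym (u + ym) ≤ 0 := by
    rw [hyp, hym, P.Bw_sum_left]
    apply Finset.sum_nonpos
    intro k _
    rcases (hd0 k).eq_or_lt with h0 | hposk
    · rw [← h0, zero_mul]
    · apply mul_nonpos_of_nonneg_of_nonpos (hd0 k)
      rw [P.Bw_sum_right']
      apply Finset.sum_nonpos
      intro j _
      rcases eq_or_ne j k with hjk | hjk
      · subst hjk
        have hcneg : c j < 0 := by
          by_contra hge
          push_neg at hge
          have hdz : d j = 0 := by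
            show max (-c j) 0 = 0
            exact max_eq_right (by linarith)
          rw [hdz] at hposk
          exact lt_irrefl _ hposk
        have hmz : max (c j) 0 = 0 := max_eq_right (le_of_lt hcneg)
        rw [hmz, zero_mul]
      · exact mul_nonpos_of_nonneg_of_nonpos (le_max_right _ _) (P.Bw_simple_offdiag hjk)
  -- Bw ym u ≥ 0
  have h2 : 0 ≤ P.Bw ym u := by
    rw [hym, P.Bw_sum_left]
    apply Finset.sum_nonneg
    intro j _
    have hBj : P.Bw (P.simple j) u
        = P.coroot (P.simple j) u * P.Bw (P.simple j) (P.simple j) / 2 := P.Bw_simple j u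
    have hdom := hu j
    have hpos := P.Bw_simple_self_pos j
    have : 0 ≤ P.Bw (P.simple j) u := by
      rw [hBj]
      positivity
    exact mul_nonneg (hd0 j) this
  have h3 : P.Bw ym ym ≤ 0 := by
    have := P.Bw_add_right ym u ym
    linarith
  have hym0 : ym = 0 := P.Bw_eq_zero_self h3
  have : d i = 0 := by
    rw [← hrepym i, hym0]
    simp
  have : -c i ≤ 0 := by
    by_contra hlt
    push_neg at hlt
    have : d i = -c i := max_eq_left (le_of_lt hlt)
    simp_all
  simpa [hc] using this

/-- a positive root has a positive pairing with some simple coroot, at a place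
where its coordinate is positive -/
lemma exists_pos_coroot {β : V} (hβ : P.IsPos β) :
    ∃ i, 0 < P.simple.repr β i ∧ 0 < P.coroot (P.simple i) β := by
  by_contra h
  push_neg at h
  have hpos : 0 < P.Bw β β := P.Bw_pos_self (P.root_ne_zero hβ.1)
  have hexp := P.Bw_sum_left (c := fun i => P.simple.repr β i) (e := fun i => P.simple i) β
  rw [P.simple.sum_repr β] at hexp
  have hnonpos : P.Bw β β ≤ 0 := by
    rw [hexp]
    apply Finset.sum_nonpos
    intro i _
    rcases (hβ.2 i).lt_or_eq with hgt | heq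
    · have hco := h i hgt
      have := P.Bw_simple i β
      have hn := P.Bw_simple_self_pos i
      have hB : P.Bw (P.simple i) β ≤ 0 := by
        rw [this]
        have := mul_nonpos_of_nonpos_of_nonneg hco (le_of_lt hn)
        linarith
      exact mul_nonpos_of_nonneg_of_nonpos (le_of_lt hgt) hB
    · rw [← heq]
      simp
  linarith

end Aux4

section Aux5

/-- evaluation of a word in simple reflections -/
noncomputable def ev (l : List ι) : V ≃ₗ[ℝ] V := (l.map P.ss).prod

lemma ev_nil : P.ev ([] : List ι) = 1 := rfl

lemma ev_cons (i : ι) (l : List ι) : P.ev (i :: l) = P.ss i * P.ev l := by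
  unfold ev
  rw [List.map_cons, List.prod_cons]

lemma ev_single (i : ι) : P.ev [i] = P.ss i := by
  rw [ev_cons, ev_nil, mul_one]

lemma ev_append (l l' : List ι) : P.ev (l ++ l') = P.ev l * P.ev l' := by
  unfold ev
  rw [List.map_append, List.prod_append]

lemma ev_mem_weyl (l : List ι) : P.ev l ∈ P.weylGroup := by
  induction l with
  | nil => exact one_mem _
  | cons i t ih =>
    rw [ev_cons]
    exact mul_mem (P.ss_mem_weyl i) ih

lemma ev_reverse (l : List ι) : (P.ev l)⁻¹ = P.ev l.reverse := by
  induction l with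
  | nil => simp [ev_nil]
  | cons i t ih =>
    rw [ev_cons, mul_inv_rev, ih, List.reverse_cons, ev_append, ev_single, P.ss_inv]

lemma ss_simple_self (i : ι) : P.ss i (P.simple i) = -P.simple i := by
  rw [ss_apply, P.coroot_self _ (P.simple_mem i)]
  module

lemma re_congr {β γ : V} (h : β = γ) (hβ : β ∈ P.R) (hγ : γ ∈ P.R) :
    P.re β hβ = P.re γ hγ := by subst h; rfl

lemma re_neg {β : V} (hβ : β ∈ P.R) : P.re (-β) (P.neg_mem_R hβ) = P.re β hβ := by
  apply LinearEquiv.toLinearMap_injective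
  apply LinearMap.ext
  intro v
  show P.re (-β) (P.neg_mem_R hβ) v = P.re β hβ v
  rw [re_apply, re_apply, P.coroot_neg hβ]
  simp

/-- the height functional -/
noncomputable def ht (v : V) : ℝ := ∑ i, P.simple.repr v i

lemma ht_simple (i : ι) : P.ht (P.simple i) = 1 := by
  unfold ht
  rw [P.simple.repr_self]
  rw [Finset.sum_eq_single i]
  · simp
  · intro k _ hk
    exact Finsupp.single_eq_of_ne hk
  · intro h; exact absurd (Finset.mem_univ i) h

lemma ht_ss (i : ι) (v : V) :
    P.ht (P.ss i v) = P.ht v - P.coroot (P.simple i) v := by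
  have : P.ht (P.ss i v) = P.ht v - P.coroot (P.simple i) v * P.ht (P.simple i) := by
    unfold ht
    rw [ss_apply, Finset.mul_sum, ← Finset.sum_sub_distrib]
    apply Finset.sum_congr rfl
    intro k _
    rw [map_sub, map_smul, Finsupp.sub_apply, Finsupp.smul_apply, smul_eq_mul]
  rw [this, P.ht_simple, mul_one]

/-- every reflection in a positive root is a word in the simple reflections -/
lemma re_eq_word_pos (n : ℕ) : ∀ (β : V) (hβ : P.IsPos β),
    ({γ : V | P.IsPos γ ∧ P.ht γ < P.ht β}).ncard < n → ∃ l, P.re β hβ.1 = P.ev l := by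
  induction n with
  | zero => intro β hβ h; exact absurd h (Nat.not_lt_zero _)
  | succ n ih =>
    intro β hβ hcard
    by_cases hA : ∃ i, ∀ k, k ≠ i → P.simple.repr β k = 0
    · -- β is a positive multiple of a simple root
      obtain ⟨i, hi⟩ := hA
      have hrep : β = P.simple.repr β i • P.simple i := by
        conv_lhs => rw [← P.simple.sum_repr β]
        rw [Finset.sum_eq_single i]
        · intro k _ hk
          rw [hi k hk, zero_smul]
        · intro h; exact absurd (Finset.mem_univ i) h
      have hc0 : P.simple.repr β i ≠ 0 := by
        intro h0
        apply P.root_ne_zero hβ.1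
        rw [hrep, h0, zero_smul]
      exact ⟨[i], by rw [P.re_smul_simple hβ.1 hc0 hrep, ev_single]⟩
    · push_neg at hA
      obtain ⟨i, hri, hco⟩ := P.exists_pos_coroot hβ
      obtain ⟨k, hki, hrk⟩ := hA i
      have hrkpos : 0 < P.simple.repr β k := (hβ.2 k).lt_of_ne (Ne.symm hrk)
      have hβ' : P.IsPos (P.ss i β) := P.ss_pos hβ hki hrkpos
      have hht : P.ht (P.ss i β) < P.ht β := by
        rw [P.ht_ss]
        linarith
      have hsub : {γ : V | P.IsPos γ ∧ P.ht γ < P.ht (P.ss i β)}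
          ⊂ {γ : V | P.IsPos γ ∧ P.ht γ < P.ht β} := by
        constructor
        · intro γ ⟨h1, h2⟩
          exact ⟨h1, lt_trans h2 hht⟩
        · intro hsup
          have : P.ss i β ∈ {γ : V | P.IsPos γ ∧ P.ht γ < P.ht β} := ⟨hβ', hht⟩
          have h2 := hsup this
          exact absurd h2.2 (lt_irrefl _)
      have hfin : ({γ : V | P.IsPos γ ∧ P.ht γ < P.ht β}).Finite :=
        P.finR.subset (fun γ hγ => hγ.1.1)
      have hlt : ({γ : V | P.IsPos γ ∧ P.ht γ < P.ht (P.ss i β)}).ncard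
          < ({γ : V | P.IsPos γ ∧ P.ht γ < P.ht β}).ncard :=
        Set.ncard_lt_ncard hsub hfin
      obtain ⟨l', hl'⟩ := ih (P.ss i β) hβ'
        (by omega)
      -- β = ss i (ss i β)
      have hssinv : P.ss i (P.ss i β) = β := by
        have := P.rlin_invol (P.coroot_self _ (P.simple_mem i)) β
        exact this
      have hmem' : P.ss i (P.ss i β) ∈ P.R := by rw [hssinv]; exact hβ.1
      have hconj := P.re_conj (P.ss_mem_weyl i) hβ'.1
      have hre : P.re β hβ.1 = P.ss i * P.re (P.ss i β) hβ'.1 * (P.ss i)⁻¹ := by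
        rw [← hconj]
        exact P.re_congr hssinv.symm _ _
      refine ⟨i :: (l' ++ [i]), ?_⟩
      rw [hre, hl', P.ss_inv, ev_cons, ev_append, ev_single]
      rw [mul_assoc]

lemma re_eq_word {β : V} (hβ : β ∈ P.R) : ∃ l, P.re β hβ = P.ev l := by
  rcases P.pos_or_neg hβ with h | h
  · exact P.re_eq_word_pos (({γ : V | P.IsPos γ ∧ P.ht γ < P.ht β}).ncard + 1) β h
      (Nat.lt_succ_self _)
  · have hpos : P.IsPos (-β) := P.isPos_neg hβ h
    obtain ⟨l, hl⟩ := P.re_eq_word_pos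
      (({γ : V | P.IsPos γ ∧ P.ht γ < P.ht (-β)}).ncard + 1) (-β) hpos (Nat.lt_succ_self _)
    refine ⟨l, ?_⟩
    rw [← hl]
    have := P.re_neg hβ
    rw [← this]

/-- every Weyl group element is a word in the simple reflections -/
lemma exists_word {w : V ≃ₗ[ℝ] V} (hw : w ∈ P.weylGroup) : ∃ l, w = P.ev l := by
  have hle : P.weylGroup ≤ {
      carrier := {w : V ≃ₗ[ℝ] V | ∃ l, w = P.ev l}
      one_mem' := ⟨[], rfl⟩
      mul_mem' := by
        rintro a b ⟨la, ha⟩ ⟨lb, hb⟩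
        exact ⟨la ++ lb, by rw [ha, hb, ev_append]⟩
      inv_mem' := by
        rintro a ⟨la, ha⟩
        exact ⟨la.reverse, by rw [ha, ev_reverse]⟩ } := by
    rw [weylGroup]
    apply Subgroup.closure_le _ |>.mpr
    rintro w ⟨β, hβ, hweq⟩
    have hwre : w = P.re β hβ := by
      apply LinearEquiv.toLinearMap_injective
      apply LinearMap.ext
      intro v
      exact hweq v
    obtain ⟨l, hl⟩ := P.re_eq_word hβ
    exact ⟨l, by rw [hwre, hl]⟩
  exact hle hw

/-- the deletion lemma -/
lemma deletion : ∀ (l : List ι) (j : ι), P.IsNeg (P.ev l (P.simple j)) →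
    ∃ l', P.ev l' = P.ev l * P.ss j ∧ l'.length + 1 = l.length := by
  intro l
  induction l with
  | nil =>
    intro j hneg
    rw [ev_nil] at hneg
    exact absurd hneg (fun h => P.not_pos_and_neg (P.isPos_simple j) h)
  | cons i t ih =>
    intro j hneg
    have huR : P.ev t (P.simple j) ∈ P.R :=
      P.weyl_mem_R (P.ev_mem_weyl t) (P.simple_mem j)
    have hev : P.ev (i :: t) (P.simple j) = P.ss i (P.ev t (P.simple j)) := by
      rw [ev_cons]; rfl
    rcases P.pos_or_neg huR with hp | hn
    · -- the suffix sends α_j to a positive root, which ss i makes negative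
      rw [hev] at hneg
      obtain ⟨c, hc, hrep⟩ := P.pos_to_neg hp hneg
      have hre1 : P.re (P.ev t (P.simple j)) huR = P.ss i :=
        P.re_smul_simple huR (ne_of_gt hc) hrep
      have hre2 : P.re (P.ev t (P.simple j)) huR
          = P.ev t * P.ss j * (P.ev t)⁻¹ :=
        (P.re_congr rfl _ _).trans (P.re_conj (P.ev_mem_weyl t) (P.simple_mem j))
      have hkey : P.ss i * P.ev t = P.ev t * P.ss j := by
        rw [← hre1, hre2]
        group
      refine ⟨t, ?_, rfl⟩
      rw [ev_cons, hkey, mul_assoc, P.ss_mul_self, mul_one]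
    · obtain ⟨t', ht1, ht2⟩ := ih j hn
      refine ⟨i :: t', ?_, ?_⟩
      · rw [ev_cons, ht1, ev_cons, mul_assoc]
      · simp only [List.length_cons]
        omega

/-- a Weyl group element sending all simple roots to positive roots is trivial -/
lemma eq_one_of_all_pos {w : V ≃ₗ[ℝ] V} (hw : w ∈ P.weylGroup)
    (h : ∀ j, P.IsPos (w (P.simple j))) : w = 1 := by
  obtain ⟨l, hl⟩ := P.exists_word hw
  subst hl
  clear hw
  have main : ∀ n : ℕ, ∀ l : List ι, l.length ≤ n →
      (∀ j, P.IsPos (P.ev l (P.simple j))) → P.ev l = 1 := by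
    intro n
    induction n with
    | zero =>
      intro l hlen _
      have : l = [] := List.eq_nil_of_length_eq_zero (Nat.le_zero.mp hlen)
      rw [this, ev_nil]
    | succ n ih =>
      intro l hlen hpos
      rcases List.eq_nil_or_concat l with rfl | ⟨l₁, j, rfl⟩
      · rw [ev_nil]
      · simp only [List.concat_eq_append] at hlen hpos ⊢
        have hev : P.ev (l₁ ++ [j]) = P.ev l₁ * P.ss j := by
          rw [ev_append, ev_single]
        have hneg : P.IsNeg (P.ev l₁ (P.simple j)) := by
          have h1 : P.ev (l₁ ++ [j]) (P.simple j) = P.ev l₁ (-(P.simple j)) := by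
            rw [hev]
            show P.ev l₁ (P.ss j (P.simple j)) = _
            rw [P.ss_simple_self j]
          have h2 : P.ev l₁ (P.simple j) = -(P.ev (l₁ ++ [j]) (P.simple j)) := by
            rw [h1, map_neg, neg_neg]
          rw [h2]
          exact P.isNeg_neg (hpos j).1 (hpos j)
        obtain ⟨l₂, h1, h2⟩ := P.deletion l₁ j hneg
        have hev2 : P.ev (l₁ ++ [j]) = P.ev l₂ := by rw [hev, h1]
        rw [hev2]
        apply ih l₂
        · have : (l₁ ++ [j]).length = l₁.length + 1 := by simp
          omega
        · intro j'
          rw [← hev2]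
          exact hpos j'
  exact main l.length l le_rfl h

end Aux5

section Aux6

/-- the inversion set -/
def Nset (w : V ≃ₗ[ℝ] V) : Set V := {β | P.IsPos β ∧ P.IsNeg (w β)}

lemma Nset_finite (w : V ≃ₗ[ℝ] V) : (P.Nset w).Finite :=
  P.finR.subset (fun β hβ => hβ.1.1)

/-- multiples of a simple root -/
def Mset (j : ι) : Set V := {β | ∃ c : ℝ, 0 < c ∧ β = c • P.simple j}

lemma pos_not_mset {j : ι} {β : V} (hβ : P.IsPos β) (hM : β ∉ P.Mset j) :
    ∃ k, k ≠ j ∧ 0 < P.simple.repr β k := by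
  by_contra h
  push_neg at h
  apply hM
  have hzero : ∀ k, k ≠ j → P.simple.repr β k = 0 := by
    intro k hk
    exact le_antisymm (h k hk) (hβ.2 k)
  have hrep : β = P.simple.repr β j • P.simple j := by
    conv_lhs => rw [← P.simple.sum_repr β]
    rw [Finset.sum_eq_single j]
    · intro k _ hk
      rw [hzero k hk, zero_smul]
    · intro hj; exact absurd (Finset.mem_univ j) hj
  refine ⟨P.simple.repr β j, ?_, hrep⟩
  rcases (hβ.2 j).lt_or_eq with h' | h'
  · exact h'
  · exfalso
    exact P.root_ne_zero hβ.1 (by rw [hrep, ← h', zero_smul])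

lemma ss_smul_simple (j : ι) (c : ℝ) : P.ss j (c • P.simple j) = -(c • P.simple j) := by
  rw [map_smul, P.ss_simple_self, smul_neg]

lemma nset_flip {w : V ≃ₗ[ℝ] V} (hw : w ∈ P.weylGroup) {j : ι}
    (hneg : P.IsNeg (w (P.simple j))) :
    (P.Nset (w * P.ss j)).ncard < (P.Nset w).ncard := by
  -- (a) the inversion set of w * ss j avoids multiples of α_j
  have hdisj : ∀ β ∈ P.Nset (w * P.ss j), β ∉ P.Mset j := by
    rintro β ⟨hβpos, hβneg⟩ ⟨c, hc, rfl⟩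
    have h1 : (w * P.ss j) (c • P.simple j) = -(c • w (P.simple j)) := by
      show w (P.ss j (c • P.simple j)) = _
      rw [P.ss_smul_simple, map_neg, map_smul]
    rw [h1] at hβneg
    have hz : w (P.simple j) = 0 := by
      have hcoords : ∀ k, P.simple.repr (w (P.simple j)) k = 0 := by
        intro k
        have ha := hneg.2 k
        have hb := hβneg.2 k
        rw [map_neg, map_smul, Finsupp.neg_apply, Finsupp.smul_apply, smul_eq_mul] at hb
        nlinarith
      have : P.simple.repr (w (P.simple j)) = 0 := Finsupp.ext hcoords
      simpa using congrArg P.simple.repr.symm this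
    exact P.root_ne_zero (P.weyl_mem_R hw (P.simple_mem j)) hz
  -- (b) ss j injects Nset (w * ss j) into Nset w \ Mset j
  have hmap : ∀ β ∈ P.Nset (w * P.ss j), P.ss j β ∈ P.Nset w \ P.Mset j := by
    rintro β hβ
    obtain ⟨hβpos, hβneg⟩ := hβ
    obtain ⟨k, hkj, hk⟩ := P.pos_not_mset hβpos (hdisj β ⟨hβpos, hβneg⟩)
    refine ⟨⟨P.ss_pos hβpos hkj hk, ?_⟩, ?_⟩
    · have : w (P.ss j β) = (w * P.ss j) β := rfl
      rw [this]
      exact hβneg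
    · rintro ⟨c, hc, hrep⟩
      have h2 : P.ss j (P.ss j β) = β :=
        P.rlin_invol (P.coroot_self _ (P.simple_mem j)) β
      have hβeq : β = -(c • P.simple j) := by
        rw [← h2, hrep, P.ss_smul_simple]
      rw [hβeq, map_neg, map_smul, Finsupp.neg_apply, Finsupp.smul_apply, smul_eq_mul] at hk
      have hrk : P.simple.repr (P.simple j) k = 0 := by
        rw [P.simple.repr_self]
        exact Finsupp.single_eq_of_ne hkj
      rw [hrk, mul_zero, neg_zero] at hk
      exact lt_irrefl _ hk
  have hinj : Set.InjOn (fun β => P.ss j β) (P.Nset (w * P.ss j)) := by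
    intro a _ b _ h
    exact (P.ss j).injective h
  have h1 : (P.Nset (w * P.ss j)).ncard ≤ (P.Nset w \ P.Mset j).ncard :=
    Set.ncard_le_ncard_of_injOn _ hmap hinj ((P.Nset_finite w).subset Set.diff_subset)
  have h2 : (P.Nset w \ P.Mset j).ncard < (P.Nset w).ncard := by
    apply Set.ncard_lt_ncard _ (P.Nset_finite w)
    constructor
    · exact Set.diff_subset
    · intro hsup
      have hjN : P.simple j ∈ P.Nset w := ⟨P.isPos_simple j, hneg⟩
      have := hsup hjN
      exact this.2 ⟨1, one_pos, (one_smul ℝ _).symm⟩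
  omega

end Aux6

section Aux7

lemma nset_empty_of_all_pos {w : V ≃ₗ[ℝ] V} (hw : w ∈ P.weylGroup)
    (h : ∀ j, ¬P.IsNeg (w (P.simple j))) : ∀ j, P.IsPos (w (P.simple j)) := by
  intro j
  have hmem : w (P.simple j) ∈ P.R := P.weyl_mem_R hw (P.simple_mem j)
  rcases P.pos_or_neg hmem with hp | hn
  · exact hp
  · exact absurd hn (h j)

/-- main monotonicity lemma: for dominant `u`, the orbit lies below `u`
coordinatewise -/
lemma orbit_repr_le {u : V} (hu : u ∈ P.fundChamber) :
    ∀ w ∈ P.weylGroup, ∀ i, P.simple.repr (w u) i ≤ P.simple.repr u i := by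
  have main : ∀ n : ℕ, ∀ w ∈ P.weylGroup, (P.Nset w).ncard ≤ n →
      ∀ i, P.simple.repr (w u) i ≤ P.simple.repr u i := by
    intro n
    induction n with
    | zero =>
      intro w hw hcard i
      have hall : ∀ j, ¬P.IsNeg (w (P.simple j)) := by
        intro j hj
        have hjN : P.simple j ∈ P.Nset w := ⟨P.isPos_simple j, hj⟩
        have : 0 < (P.Nset w).ncard :=
          (Set.ncard_pos (P.Nset_finite w)).mpr ⟨_, hjN⟩
        omega
      have hone : w = 1 := P.eq_one_of_all_pos hw (P.nset_empty_of_all_pos hw hall)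
      rw [hone]
      rfl
    | succ n ih =>
      intro w hw hcard i
      by_cases hex : ∃ j, P.IsNeg (w (P.simple j))
      · obtain ⟨j, hj⟩ := hex
        have hflip := P.nset_flip hw hj
        have hw' : w * P.ss j ∈ P.weylGroup := mul_mem hw (P.ss_mem_weyl j)
        have hexp : w u = (w * P.ss j) u + P.coroot (P.simple j) u • w (P.simple j) := by
          show w u = w (P.ss j u) + P.coroot (P.simple j) u • w (P.simple j)
          rw [ss_apply, map_sub, map_smul]
          abel
        have hrepr : P.simple.repr (w u) i
            = P.simple.repr ((w * P.ss j) u) i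
              + P.coroot (P.simple j) u * P.simple.repr (w (P.simple j)) i := by
          rw [hexp, map_add, map_smul, Finsupp.add_apply, Finsupp.smul_apply, smul_eq_mul]
        have h1 : P.simple.repr ((w * P.ss j) u) i ≤ P.simple.repr u i :=
          ih (w * P.ss j) hw' (by omega) i
        have h2 : 0 ≤ P.coroot (P.simple j) u := hu j
        have h3 : P.simple.repr (w (P.simple j)) i ≤ 0 := hj.2 i
        nlinarith
      · push_neg at hex
        have hone : w = 1 := P.eq_one_of_all_pos hw (P.nset_empty_of_all_pos hw hex)
        rw [hone]
        exact le_refl _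
  intro w hw i
  exact main (P.Nset w).ncard w hw le_rfl i

/-- existence of an antidominant element in each orbit -/
lemma exists_antidominant (x : V) :
    ∃ w ∈ P.weylGroup, ∀ i, P.coroot (P.simple i) (w x) ≤ 0 := by
  haveI : Nonempty ↥P.weylGroup := ⟨⟨1, one_mem _⟩⟩
  obtain ⟨w₀, hmin⟩ := Finite.exists_min (fun w : ↥P.weylGroup => P.ht (w.1 x))
  refine ⟨w₀.1, w₀.2, fun i => ?_⟩
  have hmem : (⟨P.ss i, P.ss_mem_weyl i⟩ : ↥P.weylGroup) * w₀ ∈ (Finset.univ : Finset ↥P.weylGroup) :=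
    Finset.mem_univ _
  have h := hmin ((⟨P.ss i, P.ss_mem_weyl i⟩ : ↥P.weylGroup) * w₀)
  have heval : (((⟨P.ss i, P.ss_mem_weyl i⟩ : ↥P.weylGroup) * w₀).1) x
      = P.ss i (w₀.1 x) := rfl
  rw [heval, P.ht_ss] at h
  linarith

/-- coordinates of an antidominant vector are nonpositive -/
lemma repr_nonpos_of_antidominant {z : V} (hz : ∀ i, P.coroot (P.simple i) z ≤ 0) (i : ι) :
    P.simple.repr z i ≤ 0 := by
  have hneg : -z ∈ P.fundChamber := by
    intro j
    rw [map_neg]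
    linarith [hz j]
  have := P.repr_nonneg_of_dominant hneg i
  rw [map_neg, Finsupp.neg_apply] at this
  linarith

end Aux7
end RootSystemWithBase

/-- **Kostant convexity on the chamber level (Lemma on dual convex hulls).**
For an irreducible crystallographic root system with base, and a dominant point
`x ∈ C_f`, the intersection of the dual convex hull of the Weyl orbit `W.x` with
the fundamental Weyl chamber is exactly the set of dominant points `y` with
`x - y` in the positive cone. -/
theorem dconv_orbit_inter_fundChamber
    {ι V : Type*} [Fintype ι] [AddCommGroup V] [Module ℝ V]
    (P : RootSystemWithBase ι V) (hirr : P.IsIrreducible)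
    (x : V) (hx : x ∈ P.fundChamber) :
    P.dconv (P.orbit x) ∩ P.fundChamber
      = {y | y ∈ P.fundChamber ∧ x - y ∈ P.posCone} := by
  ext y
  simp only [Set.mem_inter_iff, Set.mem_setOf_eq]
  constructor
  · rintro ⟨hdc, hyC⟩
    refine ⟨hyC, ?_⟩
    have hcoord : ∀ i, P.simple.repr y i ≤ P.simple.repr x i := by
      intro i
      have hH : P.IsDualHalfApartment {v : V | P.simple.coord i v ≤ P.simple.coord i x} :=
        ⟨i, P.simple.coord i x, Or.inl rfl⟩
      have hsub : P.orbit x ⊆ {v : V | P.simple.coord i v ≤ P.simple.coord i x} := by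
        rintro z ⟨w, hw, rfl⟩
        show P.simple.coord i (w x) ≤ P.simple.coord i x
        rw [Module.Basis.coord_apply, Module.Basis.coord_apply]
        exact P.orbit_repr_le hx w hw i
      have hmem := Set.mem_sInter.mp hdc _ ⟨hH, hsub⟩
      have : P.simple.coord i y ≤ P.simple.coord i x := hmem
      rwa [Module.Basis.coord_apply, Module.Basis.coord_apply] at this
    refine ⟨fun i => P.simple.repr (x - y) i, fun i => ?_, (P.simple.sum_repr (x - y)).symm⟩
    simp only [map_sub, Finsupp.coe_sub, Pi.sub_apply]
    have := hcoord i
    linarith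
  · rintro ⟨hyC, t, ht0, hteq⟩
    refine ⟨?_, hyC⟩
    have hrepr_sub : ∀ i, P.simple.repr x i - P.simple.repr y i = t i := by
      intro i
      have : P.simple.repr (x - y) i = t i := by
        rw [hteq]
        exact congrFun (P.simple.repr_sum_self t) i
      simp only [map_sub, Finsupp.coe_sub, Pi.sub_apply] at this
      exact this
    apply Set.mem_sInter.mpr
    rintro H ⟨⟨i, k, hH | hH⟩, hsub⟩
    · subst hH
      have hxH : P.simple.coord i x ≤ k := hsub ⟨1, one_mem _, rfl⟩
      show P.simple.coord i y ≤ k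
      rw [Module.Basis.coord_apply] at hxH ⊢
      have h1 := hrepr_sub i
      have h2 := ht0 i
      linarith
    · subst hH
      obtain ⟨w₀, hw₀, hanti⟩ := P.exists_antidominant x
      have hzH : k ≤ P.simple.coord i (w₀ x) := hsub ⟨w₀, hw₀, rfl⟩
      show k ≤ P.simple.coord i y
      rw [Module.Basis.coord_apply] at hzH ⊢
      have h1 : P.simple.repr (w₀ x) i ≤ 0 := P.repr_nonpos_of_antidominant hanti i
      have h2 : 0 ≤ P.simple.repr y i := P.repr_nonneg_of_dominant hyC i
      linarith
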